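/- Let E : A → P be a conditional expectation of finite index and let e ∈ A be a projection with E(e) = (Index E)^{-1}. Define F : P → P by F(x) = (Index E) E(e x e). Then for all x ∈ P, e x e = F(x) e = e F(x); consequently F is a conditional expectation from P onto Q := P ∩ {e}' and e P e = Q e. -/

import Mathlib

/-- A finite-index inclusion `P ⊆ A` of unital C*-algebras together with its
C*-basic construction, all realized inside one ambient C*-algebra `B = C*⟨A, e_P⟩`:
`E : A → P` is a conditional expectation of finite Watatani index `ind`
(a central, positive, invertible element, with inverse `indInv`), `eP` is the Jones
projection (`e_P a e_P = E(a) e_P`, `B` is the linear span of `A e_P A`), and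
`Ehat` is the (faithful) dual conditional expectation `Ê : B → A`,
`Ê(x e_P y) = (Index E)⁻¹ x y`. -/
structure WatataniSetup (B : Type*) [NormedRing B] [StarRing B] [CStarRing B]
    [NormedAlgebra ℂ B] [CompleteSpace B] [StarModule ℂ B] [PartialOrder B]
    [StarOrderedRing B] where
  A : StarSubalgebra ℂ B
  P : StarSubalgebra ℂ B
  le : P ≤ A
  E : B → B
  eP : B
  Ehat : B → B
  ind : B
  indInv : B
  ind_mem : ind ∈ P
  ind_central : ∀ b : B, Commute ind b
  ind_pos : 0 ≤ ind
  ind_mul_inv : ind * indInv = 1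
  inv_mul_ind : indInv * ind = 1
  -- `E` is a conditional expectation from `A` onto `P`
  E_add : ∀ x y : B, E (x + y) = E x + E y
  E_smul : ∀ (c : ℂ) (x : B), E (c • x) = c • E x
  E_mem : ∀ x ∈ A, E x ∈ P
  E_fix : ∀ x ∈ P, E x = x
  E_bimod : ∀ p ∈ P, ∀ q ∈ P, ∀ x : B, E (p * x * q) = p * E x * q
  E_star : ∀ x : B, E (star x) = star (E x)
  E_pos : ∀ x : B, 0 ≤ E (star x * x)
  E_faithful : ∀ x ∈ A, E (star x * x) = 0 → x = 0
  -- the Jones projection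
  eP_idem : eP * eP = eP
  eP_star : star eP = eP
  eP_conj : ∀ a ∈ A, eP * a * eP = E a * eP
  eP_comm : ∀ p ∈ P, Commute eP p
  eP_inj : ∀ p ∈ P, p * eP = 0 → p = 0
  -- `B` is the basic construction: the linear span of `A e_P A`
  span : ∀ z : B, ∃ (n : ℕ) (x y : Fin n → B),
    (∀ i, x i ∈ A) ∧ (∀ i, y i ∈ A) ∧ z = ∑ i, x i * eP * y i
  -- the dual conditional expectation `Ê : B → A`
  Ehat_add : ∀ x y : B, Ehat (x + y) = Ehat x + Ehat y
  Ehat_smul : ∀ (c : ℂ) (x : B), Ehat (c • x) = c • Ehat x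
  Ehat_mem : ∀ x : B, Ehat x ∈ A
  Ehat_fix : ∀ x ∈ A, Ehat x = x
  Ehat_bimod : ∀ p ∈ A, ∀ q ∈ A, ∀ x : B, Ehat (p * x * q) = p * Ehat x * q
  Ehat_star : ∀ x : B, Ehat (star x) = star (Ehat x)
  Ehat_pos : ∀ x : B, 0 ≤ Ehat (star x * x)
  Ehat_faithful : ∀ x : B, Ehat (star x * x) = 0 → x = 0
  Ehat_eP : ∀ x ∈ A, ∀ y ∈ A, Ehat (x * eP * y) = indInv * (x * y)


theorem central_mul_nonneg {B : Type*} [NormedRing B] [StarRing B] [PartialOrder B]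
    [StarOrderedRing B] {c : B} (hc : ∀ b : B, Commute c b) (h0 : 0 ≤ c)
    {z : B} (hz : 0 ≤ z) : 0 ≤ c * z := by
  rw [StarOrderedRing.nonneg_iff] at hz
  induction hz using AddSubmonoid.closure_induction with
  | mem s hs =>
      obtain ⟨t, rfl⟩ := hs
      have h1 : c * (star t * t) = star t * c * t := by
        rw [← mul_assoc, ← (hc (star t)).eq, mul_assoc]
      rw [h1]
      exact star_left_conjugate_nonneg h0 t
  | zero => simp
  | add x y hx hy hx' hy' =>
      rw [mul_add]
      exact add_nonneg hx' hy'


/-- if `e ∈ A` is a projection with `E(e) = (Index E)⁻¹` and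
`F : P → P` is defined by `F(x) = (Index E) E(e x e)`, then `e x e = F(x) e = e F(x)`
for all `x ∈ P`; consequently `F` is a conditional expectation from `P` onto
`Q = P ∩ {e}'` and `e P e = Q e`. -/
theorem tunnel_conditional_expectation {B : Type*} [NormedRing B] [StarRing B] [CStarRing B]
    [NormedAlgebra ℂ B] [CompleteSpace B] [StarModule ℂ B] [PartialOrder B]
    [StarOrderedRing B] (S : WatataniSetup B)
    (e : B) (he : e ∈ S.A) (he_idem : e * e = e) (he_star : star e = e)
    (hEe : S.E e = S.indInv)
    (F : B → B) (hF : ∀ x : B, F x = S.ind * S.E (e * x * e)) :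
    (∀ x ∈ S.P, e * x * e = F x * e ∧ e * x * e = e * F x) ∧
    -- F is a conditional expectation from P onto Q = P ∩ {e}'
    (∀ x ∈ S.P, F x ∈ S.P ∧ Commute (F x) e) ∧
    (∀ x ∈ S.P, Commute x e → F x = x) ∧
    (∀ x y : B, F (x + y) = F x + F y) ∧ (∀ (c : ℂ) (x : B), F (c • x) = c • F x) ∧
    (∀ p ∈ S.P, Commute p e → ∀ q ∈ S.P, Commute q e → ∀ x ∈ S.P,
        F (p * x * q) = p * F x * q) ∧
    (∀ x ∈ S.P, star (F x) = F (star x)) ∧ (∀ x ∈ S.P, 0 ≤ F (star x * x)) ∧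
    -- e P e = Q e
    (∀ x ∈ S.P, ∃ w ∈ S.P, Commute w e ∧ e * x * e = w * e) ∧
    (∀ w ∈ S.P, Commute w e → ∃ x ∈ S.P, w * e = e * x * e) := by
    -- abbreviations and basic facts
  have hPA := S.le
  have star_ind : star S.ind = S.ind := (IsSelfAdjoint.of_nonneg S.ind_pos)
  have hcen : ∀ a b : B, a * (S.ind * b) = S.ind * (a * b) := fun a b => by
    rw [← mul_assoc, ← (S.ind_central a).eq, mul_assoc]
  have indInv_comm : ∀ b : B, S.indInv * b = b * S.indInv := fun b => by
    calc S.indInv * b = S.indInv * b * (S.ind * S.indInv) := by rw [S.ind_mul_inv, mul_one]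
      _ = S.indInv * (b * S.ind) * S.indInv := by simp only [mul_assoc]
      _ = S.indInv * (S.ind * b) * S.indInv := by rw [← (S.ind_central b).eq]
      _ = (S.indInv * S.ind) * (b * S.indInv) := by simp only [mul_assoc]
      _ = b * S.indInv := by rw [S.inv_mul_ind, one_mul]
  have hcenInv : ∀ a b : B, a * (S.indInv * b) = S.indInv * (a * b) := fun a b => by
    rw [← mul_assoc, ← indInv_comm a, mul_assoc]
  have Ehat_zero : S.Ehat 0 = 0 := by
    have h := S.Ehat_smul 0 0
    simpa using h
  have Ehat_neg : ∀ x : B, S.Ehat (-x) = -S.Ehat x := fun x => by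
    have h := S.Ehat_smul (-1) x
    simpa using h
  have Ehat_sub : ∀ x y : B, S.Ehat (x - y) = S.Ehat x - S.Ehat y := fun x y => by
    rw [sub_eq_add_neg, S.Ehat_add, Ehat_neg, sub_eq_add_neg]
  -- cancellation: if b ∈ A and b * eP = 0 then b = 0
  have cancel : ∀ b ∈ S.A, b * S.eP = 0 → b = 0 := by
    intro b hb h0
    have h1 := S.Ehat_eP b hb 1 (one_mem _)
    rw [mul_one, mul_one, h0, Ehat_zero] at h1
    have h2 : b = S.ind * (S.indInv * b) := by
      rw [← mul_assoc, S.ind_mul_inv, one_mul]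
    rw [h2, ← h1, mul_zero]
  -- e * eP * e = indInv * e
  have heP_e : S.eP * e * S.eP = S.indInv * S.eP := by rw [S.eP_conj e he, hEe]
  have key : e * S.eP * e = S.indInv * e := by
    have hts : star (e * S.eP * e) = e * S.eP * e := by
      simp only [star_mul, he_star, S.eP_star, mul_assoc]
    have ht2 : (e * S.eP * e) * e = e * S.eP * e := by
      rw [mul_assoc (e * S.eP), he_idem]
    have ht3 : e * (e * S.eP * e) = e * S.eP * e := by
      rw [← mul_assoc, ← mul_assoc, he_idem]
    have ht1 : (e * S.eP * e) * (e * S.eP * e) = S.indInv * (e * S.eP * e) := by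
      calc (e * S.eP * e) * (e * S.eP * e) = e * (S.eP * (e * e) * S.eP) * e := by
            simp only [mul_assoc]
        _ = e * (S.eP * e * S.eP) * e := by rw [he_idem]
        _ = e * (S.indInv * S.eP) * e := by rw [heP_e]
        _ = S.indInv * (e * S.eP * e) := by rw [hcenInv]; simp only [mul_assoc]
    have hd_star : star (S.ind * (e * S.eP * e) - e) = S.ind * (e * S.eP * e) - e := by
      rw [star_sub, he_star, star_mul, star_ind, hts, ← (S.ind_central (e * S.eP * e)).eq]
    have hEhat_d : S.Ehat (S.ind * (e * S.eP * e) - e) = 0 := by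
      have h1 : S.Ehat ((S.ind * e) * S.eP * e) = S.indInv * (S.ind * e * e) :=
        S.Ehat_eP (S.ind * e) (mul_mem (hPA S.ind_mem) he) e he
      have h2 : S.ind * (e * S.eP * e) = (S.ind * e) * S.eP * e := by simp only [mul_assoc]
      rw [Ehat_sub, h2, h1, S.Ehat_fix e he, mul_assoc, he_idem, ← mul_assoc,
        S.inv_mul_ind, one_mul, sub_self]
    have hdd : (S.ind * (e * S.eP * e) - e) * (S.ind * (e * S.eP * e) - e)
        = -(S.ind * (e * S.eP * e) - e) := by
      have expand : (S.ind * (e * S.eP * e) - e) * (S.ind * (e * S.eP * e) - e)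
          = S.ind * (e * S.eP * e) * (S.ind * (e * S.eP * e))
            - S.ind * (e * S.eP * e) * e - e * (S.ind * (e * S.eP * e)) + e * e := by
        noncomm_ring
      have e1 : S.ind * (e * S.eP * e) * (S.ind * (e * S.eP * e)) = S.ind * (e * S.eP * e) := by
        rw [mul_assoc, hcen (e * S.eP * e), ht1, ← mul_assoc S.ind S.indInv,
          S.ind_mul_inv, one_mul]
      have e2 : S.ind * (e * S.eP * e) * e = S.ind * (e * S.eP * e) := by
        rw [mul_assoc, ht2]
      have e3 : e * (S.ind * (e * S.eP * e)) = S.ind * (e * S.eP * e) := by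
        rw [hcen, ht3]
      rw [expand, e1, e2, e3, he_idem]
      abel
    have hd0 : S.ind * (e * S.eP * e) - e = 0 := by
      apply S.Ehat_faithful
      rw [hd_star, hdd, Ehat_neg, hEhat_d, neg_zero]
    have hde : S.ind * (e * S.eP * e) = e := sub_eq_zero.mp hd0
    calc e * S.eP * e = (S.indInv * S.ind) * (e * S.eP * e) := by rw [S.inv_mul_ind, one_mul]
      _ = S.indInv * e := by rw [mul_assoc, hde]
  have he2 : e = S.ind * (e * S.eP * e) := by
    rw [key, ← mul_assoc, S.ind_mul_inv, one_mul]
  -- membership of F x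
  have hFmem : ∀ x ∈ S.P, F x ∈ S.P := by
    intro x hx
    rw [hF]
    exact mul_mem S.ind_mem (S.E_mem _ (mul_mem (mul_mem he (hPA hx)) he))
  -- main identity: e x e = F x * e
  have claim1 : ∀ x ∈ S.P, e * x * e = F x * e := by
    intro x hx
    have hxA : x ∈ S.A := hPA hx
    have hexe : e * x * e ∈ S.A := mul_mem (mul_mem he hxA) he
    have hFxP : F x ∈ S.P := hFmem x hx
    set a : B := e * x * e - F x * e with ha
    have haA : a ∈ S.A := sub_mem hexe (mul_mem (hPA hFxP) he)
    have hae : a * e = a := by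
      rw [ha, sub_mul, mul_assoc (e * x), he_idem, mul_assoc (F x), he_idem]
    have h_ePaeP : S.eP * a * S.eP = 0 := by
      have h1 : S.eP * (e * x * e) * S.eP = S.E (e * x * e) * S.eP := S.eP_conj _ hexe
      have h2 : S.eP * (F x * e) * S.eP = S.E (e * x * e) * S.eP := by
        calc S.eP * (F x * e) * S.eP = (S.eP * F x) * (e * S.eP) := by simp only [mul_assoc]
          _ = F x * (S.eP * e * S.eP) := by
              rw [(S.eP_comm _ hFxP).eq]; simp only [mul_assoc]
          _ = F x * (S.indInv * S.eP) := by rw [heP_e]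
          _ = S.indInv * (F x * S.eP) := by rw [hcenInv]
          _ = S.indInv * ((S.ind * S.E (e * x * e)) * S.eP) := by rw [hF]
          _ = (S.indInv * S.ind) * (S.E (e * x * e) * S.eP) := by simp only [mul_assoc, hcenInv]
          _ = S.E (e * x * e) * S.eP := by rw [S.inv_mul_ind, one_mul]
      calc S.eP * a * S.eP
          = S.eP * (e * x * e) * S.eP - S.eP * (F x * e) * S.eP := by rw [ha]; noncomm_ring
        _ = 0 := by rw [h1, h2, sub_self]
    have h_a_eq : a = S.ind * (a * S.eP * e) := by
      calc a = a * e := hae.symm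
        _ = a * (S.ind * (e * S.eP * e)) := by rw [← he2]
        _ = S.ind * (a * (e * S.eP * e)) := by rw [hcen]
        _ = S.ind * ((a * e) * S.eP * e) := by simp only [mul_assoc]
        _ = S.ind * (a * S.eP * e) := by rw [hae]
    have h_ePa : S.eP * a = 0 := by
      calc S.eP * a = S.eP * (S.ind * (a * S.eP * e)) := by rw [← h_a_eq]
        _ = S.ind * ((S.eP * a * S.eP) * e) := by rw [hcen]; simp only [mul_assoc]
        _ = 0 := by rw [h_ePaeP, zero_mul, mul_zero]
    have h_staraeP : star a * S.eP = 0 := by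
      have h := congrArg star h_ePa
      rwa [star_mul, S.eP_star, star_zero] at h
    have hsa : star a = 0 := cancel _ (star_mem haA) h_staraeP
    have ha0 : a = 0 := by
      rw [← star_star a, hsa, star_zero]
    exact sub_eq_zero.mp ha0
  -- F commutes with star
  have F_star : ∀ x : B, F (star x) = star (F x) := by
    intro x
    rw [hF, hF, star_mul, star_ind, ← S.E_star]
    have h : star (e * x * e) = e * star x * e := by
      simp only [star_mul, he_star, mul_assoc]
    rw [h, ← (S.ind_central (S.E (e * star x * e))).eq]
  -- e x e = e * F x
  have claim2 : ∀ x ∈ S.P, e * x * e = e * F x := by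
    intro x hx
    have h1 := claim1 (star x) (star_mem hx)
    have h2 := congrArg star h1
    have h3 : star (e * star x * e) = e * x * e := by
      simp only [star_mul, he_star, star_star, mul_assoc]
    have h4 : star (F (star x) * e) = e * F x := by
      rw [star_mul, he_star, F_star, star_star]
    rw [h3, h4] at h2
    exact h2
  refine ⟨fun x hx => ⟨claim1 x hx, claim2 x hx⟩, ?_, ?_, ?_, ?_, ?_, ?_, ?_, ?_, ?_⟩
  · -- F x ∈ P and Commute (F x) e
    intro x hx
    exact ⟨hFmem x hx, ((claim1 x hx).symm.trans (claim2 x hx))⟩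
  · -- F x = x when x commutes with e
    intro x hx hcomm
    have h1 : e * x * e = x * e := by
      rw [← hcomm.eq, mul_assoc, he_idem]
    have h2 : S.E (x * e) = x * S.indInv := by
      have h := S.E_bimod x hx 1 (one_mem _) e
      rw [mul_one, mul_one, hEe] at h
      exact h
    rw [hF, h1, h2, ← indInv_comm, ← mul_assoc, S.ind_mul_inv, one_mul]
  · -- additivity
    intro x y
    have h : e * (x + y) * e = e * x * e + e * y * e := by noncomm_ring
    rw [hF, hF, hF, h, S.E_add, mul_add]
  · -- ℂ-linearity
    intro c x
    have h : e * (c • x) * e = c • (e * x * e) := by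
      rw [mul_smul_comm, smul_mul_assoc]
    rw [hF, hF, h, S.E_smul, mul_smul_comm]
  · -- bimodule property
    intro p hp hpe q hq hqe x hx
    have h1 : e * (p * x * q) * e = p * (e * x * e) * q := by
      calc e * (p * x * q) * e = (e * p) * x * (q * e) := by simp only [mul_assoc]
        _ = (p * e) * x * (e * q) := by rw [← hpe.eq, hqe.eq]
        _ = p * (e * x * e) * q := by simp only [mul_assoc]
    rw [hF, hF, h1, S.E_bimod p hp q hq, hcen]
    simp only [mul_assoc]
  · -- star
    intro x _
    exact (F_star x).symm
  · -- positivity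
    intro x hx
    rw [hF]
    have h : e * (star x * x) * e = star (x * e) * (x * e) := by
      simp only [star_mul, he_star, mul_assoc]
    rw [h]
    exact central_mul_nonneg S.ind_central S.ind_pos (S.E_pos (x * e))
  · -- e P e ⊆ Q e
    intro x hx
    exact ⟨F x, hFmem x hx, (claim1 x hx).symm.trans (claim2 x hx), claim1 x hx⟩
  · -- Q e ⊆ e P e
    intro w hw hwe
    refine ⟨w, hw, ?_⟩
    rw [← hwe.eq, mul_assoc, he_idem]
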